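/- Let B_6 be the Boolean lattice of subsets of {1,…,6} and let G ≤ Sym({1,…,6}) be the subgroup of permutations preserving the partition of {1,…,6} into the triples {1,2,3} and {4,5,6} (so G ≅ S_3 ≀ S_2). Then the quotient complex Δ(B_6)/(S_3 ≀ S_2) is not shellable: there is no linear order F_1,…,F_r of its facets such that for every l with 1 < l ≤ r and every common face of F_l and some earlier facet F_k (k < l), there exists T' ⊆ {1,2,3,4,5} with |T'| = 4 containing the rank set of that common face such that the face of F_l with rank set T' is also a face of some F_{k'} with k' < l. -/

import Mathlib

namespace Stmt4

/-- The triple `{3i+1, 3i+2, 3i+3}` (1-based), i.e. `{3i, 3i+1, 3i+2}` in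
`Fin 6`, for `i : Fin 2`. -/
def triple (i : Fin 2) : Set (Fin 6) :=
  {⟨3 * i.val, by have := i.isLt; omega⟩,
   ⟨3 * i.val + 1, by have := i.isLt; omega⟩,
   ⟨3 * i.val + 2, by have := i.isLt; omega⟩}

/-- Membership in the wreath product subgroup `S_3 ≀ S_2 ≤ Sym({1,…,6})`:
each of the triples `{1,2,3}`, `{4,5,6}` is carried to one of these triples. -/
def IsTriplePerm (g : Equiv.Perm (Fin 6)) : Prop :=
  ∀ i : Fin 2, ∃ j : Fin 2, ⇑g '' triple i = triple j

/-- A chain in the proper part of the Boolean lattice `B_6`. -/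
def ProperChain (c : Set (Set (Fin 6))) : Prop :=
  IsChain (· ⊆ ·) c ∧ ∀ A ∈ c, A.Nonempty ∧ A ≠ Set.univ

/-- The rank set of a chain of subsets: the set of cardinalities of its members. -/
noncomputable def rankSet (c : Set (Set (Fin 6))) : Set ℕ :=
  Set.ncard '' c

/-- Two chains lie in the same `S_3 ≀ S_2`-orbit. -/
def OrbEq (c c' : Set (Set (Fin 6))) : Prop :=
  ∃ g : Equiv.Perm (Fin 6), IsTriplePerm g ∧ (fun A => ⇑g '' A) '' c = c'

/-- A maximal chain of the proper part of `B_6`: one member of each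
cardinality `1,…,5`. -/
noncomputable def MaxChain (c : Set (Set (Fin 6))) : Prop :=
  ProperChain c ∧ rankSet c = Set.Icc 1 5

/-- The subchain of `c` consisting of its members whose cardinality lies in `T`. -/
noncomputable def restrict (c : Set (Set (Fin 6))) (T : Set ℕ) : Set (Set (Fin 6)) :=
  {A ∈ c | A.ncard ∈ T}

/-- The chain (orbit) `σ` is a face of the facet represented by the chain `c`. -/
noncomputable def IsFaceOf (σ c : Set (Set (Fin 6))) : Prop :=
  OrbEq (restrict c (rankSet σ)) σ

/-! ### Basic sets -/

def fP (a b : ℕ) : Finset (Fin 6) :=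
  Finset.univ.filter (fun x => x.1 < a ∨ (3 ≤ x.1 ∧ x.1 < 3 + b))

def Pset (a b : ℕ) : Set (Fin 6) := ↑(fP a b)

lemma triple0_eq : triple 0 = Pset 3 0 := by
  ext x; fin_cases x <;> simp [triple, Pset, fP] <;> decide
lemma triple1_eq : triple 1 = Pset 0 3 := by
  ext x; fin_cases x <;> simp [triple, Pset, fP] <;> decide

lemma mem_Pset {a b : ℕ} {x : Fin 6} :
    x ∈ Pset a b ↔ (x.1 < a ∨ (3 ≤ x.1 ∧ x.1 < 3 + b)) := by
  simp [Pset, fP]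

lemma Pset_card {a b : ℕ} (ha : a ≤ 3) (hb : b ≤ 3) : (Pset a b).ncard = a + b := by
  rw [Pset, Set.ncard_coe_finset]
  interval_cases a <;> interval_cases b <;> decide

lemma Pset_inter_T0 {a b : ℕ} (ha : a ≤ 3) (hb : b ≤ 3) :
    (Pset a b ∩ triple 0).ncard = a := by
  rw [triple0_eq, Pset, Pset, ← Finset.coe_inter, Set.ncard_coe_finset]
  interval_cases a <;> interval_cases b <;> decide

lemma Pset_inter_T1 {a b : ℕ} (ha : a ≤ 3) (hb : b ≤ 3) :
    (Pset a b ∩ triple 1).ncard = b := by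
  rw [triple1_eq, Pset, Pset, ← Finset.coe_inter, Set.ncard_coe_finset]
  interval_cases a <;> interval_cases b <;> decide

lemma Pset_mono {a b a' b' : ℕ} (ha : a ≤ a') (hb : b ≤ b') : Pset a b ⊆ Pset a' b' := by
  intro x hx; rw [mem_Pset] at *; omega

/-! ### The block swap permutation -/

def g0 : Equiv.Perm (Fin 6) :=
  ⟨fun x => ⟨(x.1 + 3) % 6, by omega⟩, fun x => ⟨(x.1 + 3) % 6, by omega⟩,
   by decide, by decide⟩

lemma g0_Pset {a b : ℕ} (ha : a ≤ 3) (hb : b ≤ 3) : ⇑g0 '' Pset a b = Pset b a := by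
  rw [Pset, Pset, ← Finset.coe_image]
  norm_cast
  interval_cases a <;> interval_cases b <;> decide

lemma g0_T0 : ⇑g0 '' triple 0 = triple 1 := by
  rw [triple0_eq, triple1_eq, g0_Pset] <;> omega
lemma g0_T1 : ⇑g0 '' triple 1 = triple 0 := by
  rw [triple0_eq, triple1_eq, g0_Pset] <;> omega

lemma g0_TP : IsTriplePerm g0 := by
  intro i
  fin_cases i
  · exact ⟨1, g0_T0⟩
  · exact ⟨0, g0_T1⟩

/-! ### triple facts -/

lemma mem_T0_iff {x : Fin 6} : x ∈ triple 0 ↔ x.1 < 3 := by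
  rw [triple0_eq, mem_Pset]; omega
lemma mem_T1_iff {x : Fin 6} : x ∈ triple 1 ↔ 3 ≤ x.1 := by
  rw [triple1_eq, mem_Pset]; omega

lemma T1_compl : triple 1 = (triple 0)ᶜ := by
  ext x; simp only [Set.mem_compl_iff, mem_T0_iff, mem_T1_iff]; omega

lemma T0_ne_T1 : triple 0 ≠ triple 1 := by
  intro h
  have : (⟨0, by omega⟩ : Fin 6) ∈ triple 0 := mem_T0_iff.2 (by norm_num)
  rw [h, mem_T1_iff] at this
  simp at this

lemma T0_card : (triple 0).ncard = 3 := by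
  rw [triple0_eq]; rw [Pset, Set.ncard_coe_finset]; decide
lemma T1_card : (triple 1).ncard = 3 := by
  rw [triple1_eq]; rw [Pset, Set.ncard_coe_finset]; decide

lemma ncard_split (A : Set (Fin 6)) :
    (A ∩ triple 0).ncard + (A ∩ triple 1).ncard = A.ncard := by
  rw [T1_compl]
  rw [← Set.ncard_union_eq (by exact disjoint_compl_right.mono inf_le_right inf_le_right)
      (Set.toFinite _) (Set.toFinite _)]
  congr 1
  rw [← Set.inter_union_distrib_left, Set.union_compl_self, Set.inter_univ]

/-! ### Group lemmas -/

lemma TP_one : IsTriplePerm 1 := fun i => ⟨i, by simp⟩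

lemma TP_cases {g : Equiv.Perm (Fin 6)} (hg : IsTriplePerm g) :
    (⇑g '' triple 0 = triple 0 ∧ ⇑g '' triple 1 = triple 1) ∨
    (⇑g '' triple 0 = triple 1 ∧ ⇑g '' triple 1 = triple 0) := by
  obtain ⟨j0, h0⟩ := hg 0
  obtain ⟨j1, h1⟩ := hg 1
  have hne : ⇑g '' triple 0 ≠ ⇑g '' triple 1 := by
    intro h
    exact T0_ne_T1 (Set.image_eq_image g.injective |>.1 h)
  fin_cases j0 <;> fin_cases j1
  · exact absurd (h0.trans h1.symm) hne
  · exact Or.inl ⟨h0, h1⟩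
  · exact Or.inr ⟨h0, h1⟩
  · exact absurd (h0.trans h1.symm) hne

lemma TP_mul {g h : Equiv.Perm (Fin 6)} (hg : IsTriplePerm g) (hh : IsTriplePerm h) :
    IsTriplePerm (g * h) := by
  intro i
  obtain ⟨j, hj⟩ := hh i
  obtain ⟨k, hk⟩ := hg j
  refine ⟨k, ?_⟩
  rw [show ⇑(g * h) = ⇑g ∘ ⇑h from rfl, Set.image_comp, hj, hk]

lemma TP_inv {g : Equiv.Perm (Fin 6)} (hg : IsTriplePerm g) : IsTriplePerm g⁻¹ := by
  have key : ∀ s t : Set (Fin 6), ⇑g '' s = t → ⇑g⁻¹ '' t = s := by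
    intro s t h
    rw [← h, ← Set.image_comp]
    simp
  rcases TP_cases hg with ⟨h0, h1⟩ | ⟨h0, h1⟩
  · intro i; fin_cases i
    · exact ⟨0, key _ _ h0⟩
    · exact ⟨1, key _ _ h1⟩
  · intro i; fin_cases i
    · exact ⟨1, key _ _ h1⟩
    · exact ⟨0, key _ _ h0⟩

lemma OrbEq.refl (c : Set (Set (Fin 6))) : OrbEq c c :=
  ⟨1, TP_one, by simp⟩

lemma OrbEq.symm {c c' : Set (Set (Fin 6))} (h : OrbEq c c') : OrbEq c' c := by
  obtain ⟨g, hg, himg⟩ := h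
  refine ⟨g⁻¹, TP_inv hg, ?_⟩
  rw [← himg, Set.image_image]
  have : ∀ A : Set (Fin 6), ⇑g⁻¹ '' (⇑g '' A) = A := by
    intro A; rw [← Set.image_comp]; simp
  simp only [this, Set.image_id']

lemma OrbEq.trans {c c' c'' : Set (Set (Fin 6))} (h : OrbEq c c') (h' : OrbEq c' c'') :
    OrbEq c c'' := by
  obtain ⟨g, hg, rfl⟩ := h
  obtain ⟨g', hg', rfl⟩ := h'
  refine ⟨g' * g, TP_mul hg' hg, ?_⟩
  rw [Set.image_image]
  exact Set.image_congr fun A _ => by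
    rw [show ⇑(g' * g) = ⇑g' ∘ ⇑g from rfl, Set.image_comp]

lemma OrbEq_image {g : Equiv.Perm (Fin 6)} (hg : IsTriplePerm g) (c : Set (Set (Fin 6))) :
    OrbEq c ((fun A => ⇑g '' A) '' c) := ⟨g, hg, rfl⟩

/-! ### Invariant -/

noncomputable def pr (c : Set (Set (Fin 6))) : Set (ℕ × ℕ) :=
  (fun A => (A.ncard, (A ∩ triple 0).ncard)) '' c

lemma img_ncard (g : Equiv.Perm (Fin 6)) (A : Set (Fin 6)) : (⇑g '' A).ncard = A.ncard :=
  Set.ncard_image_of_injective A g.injective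

lemma pr_orb {c c' : Set (Set (Fin 6))} (h : OrbEq c c') :
    pr c' = pr c ∨ pr c' = (fun p => (p.1, p.1 - p.2)) '' pr c := by
  obtain ⟨g, hg, rfl⟩ := h
  rcases TP_cases hg with ⟨h0, _⟩ | ⟨_, h1⟩
  · left
    rw [pr, Set.image_image]
    apply Set.image_congr
    intro A _
    rw [img_ncard]
    congr 1
    conv_lhs => rw [← h0]
    rw [← Set.image_inter g.injective, img_ncard]
  · right
    rw [pr, pr, Set.image_image, Set.image_image]
    apply Set.image_congr
    intro A _
    have : ⇑g '' A ∩ triple 0 = ⇑g '' (A ∩ triple 1) := by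
      rw [Set.image_inter g.injective, h1]
    rw [img_ncard, this, img_ncard]
    have hs := ncard_split A
    simp only []
    congr 1
    omega

/-! ### restrict and rankSet lemmas -/

lemma restrict_image (g : Equiv.Perm (Fin 6)) (c : Set (Set (Fin 6))) (T : Set ℕ) :
    restrict ((fun A => ⇑g '' A) '' c) T = (fun A => ⇑g '' A) '' restrict c T := by
  ext B
  simp only [restrict, Set.mem_setOf_eq, Set.mem_image]
  constructor
  · rintro ⟨⟨A, hA, rfl⟩, hcard⟩
    exact ⟨A, ⟨hA, by rwa [img_ncard] at hcard⟩, rfl⟩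
  · rintro ⟨A, ⟨hA, hcard⟩, rfl⟩
    exact ⟨⟨A, hA, rfl⟩, by rwa [img_ncard]⟩

lemma OrbEq_restrict {c c' : Set (Set (Fin 6))} (h : OrbEq c c') (T : Set ℕ) :
    OrbEq (restrict c T) (restrict c' T) := by
  obtain ⟨g, hg, rfl⟩ := h
  rw [restrict_image]
  exact ⟨g, hg, rfl⟩

lemma rankSet_orb {c c' : Set (Set (Fin 6))} (h : OrbEq c c') : rankSet c' = rankSet c := by
  obtain ⟨g, hg, rfl⟩ := h
  rw [rankSet, rankSet, Set.image_image]
  exact Set.image_congr fun A _ => img_ncard g A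

lemma rankSet_restrict (c : Set (Set (Fin 6))) (T : Set ℕ) :
    rankSet (restrict c T) = rankSet c ∩ T := by
  ext n
  simp only [rankSet, restrict, Set.mem_image, Set.mem_inter_iff, Set.mem_setOf_eq]
  constructor
  · rintro ⟨A, ⟨hA, hT⟩, rfl⟩
    exact ⟨⟨A, hA, rfl⟩, hT⟩
  · rintro ⟨⟨A, hA, rfl⟩, hT⟩
    exact ⟨A, ⟨hA, hT⟩, rfl⟩

lemma IsFaceOf_congr {c c' σ : Set (Set (Fin 6))} (h : OrbEq c c') :
    IsFaceOf σ c ↔ IsFaceOf σ c' := by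
  unfold IsFaceOf
  constructor
  · intro h'
    exact ((OrbEq_restrict h _).symm).trans h'
  · intro h'
    exact (OrbEq_restrict h _).trans h'

lemma ProperChain_mono {c c' : Set (Set (Fin 6))} (hsub : c' ⊆ c) (h : ProperChain c) :
    ProperChain c' :=
  ⟨h.1.mono hsub, fun A hA => h.2 A (hsub hA)⟩

lemma MaxChain_orb {c c' : Set (Set (Fin 6))} (h : OrbEq c c') (hc : MaxChain c) :
    MaxChain c' := by
  obtain ⟨g, hg, rfl⟩ := h
  refine ⟨⟨?_, ?_⟩, ?_⟩
  · rintro _ ⟨A, hA, rfl⟩ _ ⟨B, hB, rfl⟩ hne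
    have hAB : A ≠ B := by rintro rfl; exact hne rfl
    rcases hc.1.1 hA hB hAB with h' | h'
    · exact Or.inl (Set.image_mono h')
    · exact Or.inr (Set.image_mono h')
  · rintro _ ⟨A, hA, rfl⟩
    refine ⟨(hc.1.2 A hA).1.image g, ?_⟩
    intro h'
    apply (hc.1.2 A hA).2
    have := congrArg (Set.ncard) h'
    rw [img_ncard, Set.ncard_univ] at this
    rw [← Set.ncard_univ] at this
    exact Set.eq_of_subset_of_ncard_le (Set.subset_univ A) (le_of_eq this.symm) (Set.toFinite _)
  · rw [show rankSet ((fun A => ⇑g '' A) '' c) = rankSet c from rankSet_orb ⟨g, hg, rfl⟩]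
    exact hc.2

/-! ### Words and canonical chains -/

def wl : Fin 10 → List ℕ :=
  ![[0,0,0,1,2],[0,0,1,1,2],[0,0,1,2,2],[0,0,1,2,3],[0,1,1,1,2],
    [0,1,1,2,2],[0,1,1,2,3],[0,1,2,2,2],[0,1,2,2,3],[0,1,2,3,3]]

def aw (i : Fin 10) (t : ℕ) : ℕ :=
  if t = 0 then 0 else if 6 ≤ t then 3 else (wl i).getD (t-1) 0

lemma aw_le (i : Fin 10) (t : ℕ) (h1 : 1 ≤ t) (h5 : t ≤ 5) :
    aw i t ≤ t ∧ aw i t ≤ 3 ∧ t - aw i t ≤ 3 ∧ t ≤ 3 + aw i t := by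
  interval_cases t <;> revert i <;> decide

lemma aw_mono (i : Fin 10) (s t : ℕ) (h1 : 1 ≤ s) (hst : s ≤ t) (h5 : t ≤ 5) :
    aw i s ≤ aw i t ∧ s - aw i s ≤ t - aw i t := by
  have hs5 : s ≤ 5 := le_trans hst h5
  interval_cases s <;> interval_cases t <;> revert i <;> decide

noncomputable def mem10 (i : Fin 10) (t : ℕ) : Set (Fin 6) := Pset (aw i t) (t - aw i t)

noncomputable def D (i : Fin 10) : Set (Set (Fin 6)) := mem10 i '' Set.Icc 1 5

lemma mem10_ncard (i : Fin 10) (t : ℕ) (h1 : 1 ≤ t) (h5 : t ≤ 5) : (mem10 i t).ncard = t := by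
  obtain ⟨ha, hb, hc, hd⟩ := aw_le i t h1 h5
  rw [mem10, Pset_card hb hc]
  omega

lemma mem10_T0 (i : Fin 10) (t : ℕ) (h1 : 1 ≤ t) (h5 : t ≤ 5) :
    (mem10 i t ∩ triple 0).ncard = aw i t := by
  obtain ⟨ha, hb, hc, hd⟩ := aw_le i t h1 h5
  rw [mem10, Pset_inter_T0 hb hc]

lemma D_max (i : Fin 10) : MaxChain (D i) := by
  refine ⟨⟨?_, ?_⟩, ?_⟩
  · rintro _ ⟨s, hs, rfl⟩ _ ⟨t, ht, rfl⟩ _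
    simp only [Set.mem_Icc] at hs ht
    rcases le_total s t with h | h
    · obtain ⟨h1, h2⟩ := aw_mono i s t hs.1 h ht.2
      exact Or.inl (Pset_mono h1 h2)
    · obtain ⟨h1, h2⟩ := aw_mono i t s ht.1 h hs.2
      exact Or.inr (Pset_mono h1 h2)
  · rintro _ ⟨t, ht, rfl⟩
    simp only [Set.mem_Icc] at ht
    constructor
    · apply Set.nonempty_of_ncard_ne_zero
      rw [mem10_ncard i t ht.1 ht.2]; omega
    · intro h
      have := congrArg Set.ncard h
      rw [mem10_ncard i t ht.1 ht.2, Set.ncard_univ] at this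
      simp [Nat.card_eq_fintype_card] at this
      omega
  · rw [rankSet, D, Set.image_image]
    rw [Set.image_congr (fun t ht => mem10_ncard i t (Set.mem_Icc.1 ht).1 (Set.mem_Icc.1 ht).2)]
    exact Set.image_id _

lemma restrict_D (i : Fin 10) (S : Set ℕ) (hS : S ⊆ Set.Icc 1 5) :
    restrict (D i) S = mem10 i '' S := by
  ext B
  simp only [restrict, D, Set.mem_setOf_eq, Set.mem_image]
  constructor
  · rintro ⟨⟨t, ht, rfl⟩, hcard⟩
    simp only [Set.mem_Icc] at ht
    rw [mem10_ncard i t ht.1 ht.2] at hcard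
    exact ⟨t, hcard, rfl⟩
  · rintro ⟨t, htS, rfl⟩
    have ht := hS htS
    simp only [Set.mem_Icc] at ht
    exact ⟨⟨t, Set.mem_Icc.2 ht, rfl⟩, by rw [mem10_ncard i t ht.1 ht.2]; exact htS⟩

lemma pr_restrict_D (i : Fin 10) (S : Set ℕ) (hS : S ⊆ Set.Icc 1 5) :
    pr (restrict (D i) S) = (fun t => (t, aw i t)) '' S := by
  rw [restrict_D i S hS, pr, Set.image_image]
  apply Set.image_congr
  intro t htS
  have ht := hS htS
  simp only [Set.mem_Icc] at ht
  rw [mem10_ncard i t ht.1 ht.2, mem10_T0 i t ht.1 ht.2]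

lemma graph_eq {f g : ℕ → ℕ} {S : Set ℕ}
    (h : (fun t => (t, f t)) '' S = (fun t => (t, g t)) '' S) :
    ∀ t ∈ S, f t = g t := by
  intro t htS
  have : (t, f t) ∈ (fun t => (t, g t)) '' S := h ▸ Set.mem_image_of_mem _ htS
  obtain ⟨t', _, heq⟩ := this
  have h1 : t' = t := congrArg Prod.fst heq
  have h2 : g t' = f t := congrArg Prod.snd heq
  subst h1
  exact h2.symm

/-- Forward: orbit-equivalence of faces of canonical chains forces word agreement. -/
lemma agree_of_orb {i j : Fin 10} {S : Set ℕ} (hS : S ⊆ Set.Icc 1 5)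
    (h : OrbEq (restrict (D j) S) (restrict (D i) S)) :
    (∀ t ∈ S, aw j t = aw i t) ∨ (∀ t ∈ S, aw j t + aw i t = t) := by
  rcases pr_orb h with hp | hp
  · left
    rw [pr_restrict_D i S hS, pr_restrict_D j S hS] at hp
    exact fun t ht => (graph_eq hp t ht).symm
  · right
    rw [pr_restrict_D i S hS, pr_restrict_D j S hS, Set.image_image] at hp
    have := graph_eq hp
    intro t htS
    have h2 := (this t htS).symm
    simp only at h2
    have ht := hS htS
    simp only [Set.mem_Icc] at ht
    have := (aw_le j t ht.1 ht.2).1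
    omega

/-- Backward: word agreement gives orbit-equivalence of faces. -/
lemma orb_of_agree {i j : Fin 10} {S : Set ℕ} (hS : S ⊆ Set.Icc 1 5)
    (h : (∀ t ∈ S, aw j t = aw i t) ∨ (∀ t ∈ S, aw j t + aw i t = t)) :
    OrbEq (restrict (D j) S) (restrict (D i) S) := by
  rw [restrict_D i S hS, restrict_D j S hS]
  rcases h with h | h
  · have heq : mem10 j '' S = mem10 i '' S :=
      Set.image_congr fun t ht => by unfold mem10; rw [h t ht]
    rw [heq]
    exact OrbEq.refl _
  · have key : ∀ t ∈ S, ⇑g0 '' mem10 j t = mem10 i t := by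
      intro t htS
      have ht := hS htS
      simp only [Set.mem_Icc] at ht
      obtain ⟨ha, hb, hc, hd⟩ := aw_le j t ht.1 ht.2
      have hsum := h t htS
      unfold mem10
      rw [g0_Pset hb hc]
      have e1 : t - aw j t = aw i t := by omega
      have e2 : aw j t = t - aw i t := by omega
      rw [e1, e2]
    have himg : (fun A => ⇑g0 '' A) '' (mem10 j '' S) = mem10 i '' S := by
      rw [Set.image_image]
      exact Set.image_congr key
    exact himg ▸ OrbEq_image g0_TP (mem10 j '' S)

/-! ### Extraction of data from a maximal chain -/

lemma chain_rank_unique {c : Set (Set (Fin 6))} (hc : IsChain (· ⊆ ·) c)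
    {A B : Set (Fin 6)} (hA : A ∈ c) (hB : B ∈ c) (h : A.ncard = B.ncard) : A = B := by
  rcases eq_or_ne A B with h' | h'
  · exact h'
  · rcases hc hA hB h' with hs | hs
    · exact Set.eq_of_subset_of_ncard_le hs (le_of_eq h.symm) (Set.toFinite _)
    · exact (Set.eq_of_subset_of_ncard_le hs (le_of_eq h) (Set.toFinite _)).symm

structure MCData (c : Set (Set (Fin 6))) where
  A : ℕ → Set (Fin 6)
  hcard : ∀ t, t ≤ 6 → (A t).ncard = t
  hmem : ∀ t, 1 ≤ t → t ≤ 5 → A t ∈ c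
  hmono : ∀ s t, s ≤ t → t ≤ 6 → A s ⊆ A t
  hrepr : c = A '' Set.Icc 1 5
  x : ℕ → Fin 6
  hx : ∀ t, 1 ≤ t → t ≤ 6 → A t = A (t-1) ∪ {x t}
  hxn : ∀ t, 1 ≤ t → t ≤ 6 → x t ∉ A (t-1)

noncomputable def extract {c : Set (Set (Fin 6))} (hc : MaxChain c) : MCData c := by
  classical
  have hex : ∀ t, 1 ≤ t → t ≤ 5 → ∃ B ∈ c, B.ncard = t := by
    intro t h1 h5
    have : t ∈ rankSet c := hc.2 ▸ Set.mem_Icc.2 ⟨h1, h5⟩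
    obtain ⟨B, hB, hBt⟩ := this
    exact ⟨B, hB, hBt⟩
  set A : ℕ → Set (Fin 6) := fun t =>
    if h : 1 ≤ t ∧ t ≤ 5 then (hex t h.1 h.2).choose
    else if t = 0 then ∅ else Set.univ with hA
  have hmem : ∀ t, 1 ≤ t → t ≤ 5 → A t ∈ c := by
    intro t h1 h5
    simp only [hA, dif_pos (And.intro h1 h5)]
    exact (hex t h1 h5).choose_spec.1
  have hcard : ∀ t, t ≤ 6 → (A t).ncard = t := by
    intro t h6
    by_cases h : 1 ≤ t ∧ t ≤ 5
    · simp only [hA, dif_pos h]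
      exact (hex t h.1 h.2).choose_spec.2
    · rcases Nat.lt_or_ge t 1 with h' | h'
      · interval_cases t
        simp [hA]
      · have h6' : t = 6 := by omega
        subst h6'
        simp only [hA]
        norm_num
  have hmono : ∀ s t, s ≤ t → t ≤ 6 → A s ⊆ A t := by
    intro s t hst h6
    rcases eq_or_ne s t with rfl | hne
    · exact subset_rfl
    rcases Nat.lt_or_ge s 1 with hs0 | hs1
    · interval_cases s
      have : A 0 = ∅ := by simp [hA]
      rw [this]; exact Set.empty_subset _
    rcases Nat.lt_or_ge t 6 with ht5 | ht6
    · -- both in [1,5]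
      have hsc := hmem s hs1 (by omega)
      have htc := hmem t (by omega) (by omega)
      have hAB : A s ≠ A t := by
        intro h
        have := congrArg Set.ncard h
        rw [hcard s (by omega), hcard t (by omega)] at this
        omega
      rcases hc.1.1 hsc htc hAB with h | h
      · exact h
      · exfalso
        apply hAB
        exact (Set.eq_of_subset_of_ncard_le h
          (by rw [hcard s (by omega), hcard t (by omega)]; omega) (Set.toFinite _)).symm
    · have : t = 6 := by omega
      subst this
      have : A 6 = Set.univ := by simp [hA]
      rw [this]; exact Set.subset_univ _
  have hrepr : c = A '' Set.Icc 1 5 := by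
    apply Set.eq_of_subset_of_subset
    · intro B hB
      have : B.ncard ∈ rankSet c := ⟨B, hB, rfl⟩
      rw [hc.2, Set.mem_Icc] at this
      refine ⟨B.ncard, Set.mem_Icc.2 this, ?_⟩
      exact (chain_rank_unique hc.1.1 (hmem _ this.1 this.2) hB
        (hcard _ (by omega))).symm ▸ rfl
    · rintro _ ⟨t, ht, rfl⟩
      simp only [Set.mem_Icc] at ht
      exact hmem t ht.1 ht.2
  have hdiff : ∀ t, 1 ≤ t → t ≤ 6 → ∃ y, A t \ A (t-1) = {y} := by
    intro t h1 h6
    have hsub := hmono (t-1) t (by omega) h6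
    have : (A t \ A (t-1)).ncard = 1 := by
      rw [Set.ncard_diff hsub (Set.toFinite _), hcard t h6, hcard (t-1) (by omega)]
      omega
    exact Set.ncard_eq_one.1 this
  set x : ℕ → Fin 6 := fun t =>
    if h : 1 ≤ t ∧ t ≤ 6 then (hdiff t h.1 h.2).choose else ⟨0, by omega⟩ with hxdef
  have hxspec : ∀ t, 1 ≤ t → t ≤ 6 → A t \ A (t-1) = {x t} := by
    intro t h1 h6
    simp only [hxdef, dif_pos (And.intro h1 h6)]
    exact (hdiff t h1 h6).choose_spec
  refine ⟨A, hcard, hmem, hmono, hrepr, x, ?_, ?_⟩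
  · intro t h1 h6
    rw [← hxspec t h1 h6]
    rw [Set.union_diff_cancel (hmono (t-1) t (by omega) h6)]
  · intro t h1 h6
    intro hmem'
    have : x t ∈ A t \ A (t-1) := by rw [hxspec t h1 h6]; exact rfl
    exact this.2 hmem'

/-- The word of a chain datum. -/
noncomputable def MCData.w {c : Set (Set (Fin 6))} (d : MCData c) (t : ℕ) : ℕ :=
  (d.A t ∩ triple 0).ncard

lemma MCData.w0 {c : Set (Set (Fin 6))} (d : MCData c) : d.w 0 = 0 := by
  have : d.A 0 = ∅ := Set.ncard_eq_zero (Set.toFinite _) |>.1 (d.hcard 0 (by omega))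
  rw [MCData.w, this]
  simp

lemma MCData.w6 {c : Set (Set (Fin 6))} (d : MCData c) : d.w 6 = 3 := by
  have : d.A 6 = Set.univ := by
    have h := d.hcard 6 (le_refl _)
    apply Set.eq_of_subset_of_ncard_le (Set.subset_univ _) _ (Set.toFinite _) |>.symm |>.symm
    rw [h, Set.ncard_univ]
    simp [Nat.card_eq_fintype_card]
  rw [MCData.w, this, Set.univ_inter, T0_card]

lemma MCData.wbound {c : Set (Set (Fin 6))} (d : MCData c) (t : ℕ) (h6 : t ≤ 6) :
    d.w t ≤ 3 ∧ t ≤ 3 + d.w t ∧ d.w t ≤ t := by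
  have h1 : d.w t ≤ 3 := by
    rw [← T0_card]
    exact Set.ncard_le_ncard Set.inter_subset_right (Set.toFinite _)
  have hsplit := ncard_split (d.A t)
  rw [d.hcard t h6] at hsplit
  have h2 : (d.A t ∩ triple 1).ncard ≤ 3 := by
    rw [← T1_card]
    exact Set.ncard_le_ncard Set.inter_subset_right (Set.toFinite _)
  unfold MCData.w at *
  omega

lemma MCData.wstep {c : Set (Set (Fin 6))} (d : MCData c) (t : ℕ) (h1 : 1 ≤ t) (h6 : t ≤ 6) :
    (d.x t ∈ triple 0 ∧ d.w t = d.w (t-1) + 1) ∨ (d.x t ∉ triple 0 ∧ d.w t = d.w (t-1)) := by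
  have hsplit : d.A t ∩ triple 0 = (d.A (t-1) ∩ triple 0) ∪ ({d.x t} ∩ triple 0) := by
    rw [d.hx t h1 h6, Set.union_inter_distrib_right]
  by_cases hx0 : d.x t ∈ triple 0
  · left
    refine ⟨hx0, ?_⟩
    have hs : {d.x t} ∩ triple 0 = {d.x t} := by
      rw [Set.inter_eq_left]
      exact Set.singleton_subset_iff.2 hx0
    rw [MCData.w, hsplit, hs, Set.union_singleton,
      Set.ncard_insert_of_notMem (fun h => d.hxn t h1 h6 h.1) (Set.toFinite _)]
    rfl
  · right
    refine ⟨hx0, ?_⟩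
    rw [MCData.w, hsplit, Set.singleton_inter_eq_empty.mpr hx0, Set.union_empty]
    rfl

lemma MCData.xmem {c : Set (Set (Fin 6))} (d : MCData c) (t : ℕ) (h1 : 1 ≤ t) (h6 : t ≤ 6) :
    d.x t ∈ d.A t := by
  rw [d.hx t h1 h6]
  exact Set.mem_union_right _ rfl

/-! ### Enumeration of a maximal chain and the two-chain lemma -/

noncomputable def MCData.e {c : Set (Set (Fin 6))} (d : MCData c) : Fin 6 → Fin 6 :=
  fun k => d.x (k.1 + 1)

lemma MCData.e_inj {c : Set (Set (Fin 6))} (d : MCData c) : Function.Injective d.e := by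
  have key : ∀ k k' : Fin 6, k.1 < k'.1 → d.e k ≠ d.e k' := by
    intro k k' hlt heq
    have h1 : d.e k ∈ d.A (k.1 + 1) := d.xmem (k.1+1) (by omega) (by omega)
    have h2 : d.A (k.1 + 1) ⊆ d.A k'.1 := d.hmono _ _ (by omega) (by omega)
    have h3 : d.e k' ∉ d.A k'.1 := by
      have := d.hxn (k'.1+1) (by omega) (by omega)
      simpa [MCData.e] using this
    exact h3 (heq ▸ (h2 h1))
  intro k k' heq
  by_contra hne
  rcases Nat.lt_or_ge k.1 k'.1 with h | h
  · exact key k k' h heq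
  · have : k'.1 < k.1 := by
      rcases Nat.lt_or_ge k'.1 k.1 with h' | h'
      · exact h'
      · exact absurd (Fin.ext (by omega)) hne
    exact key k' k this heq.symm

noncomputable def MCData.E {c : Set (Set (Fin 6))} (d : MCData c) : Equiv.Perm (Fin 6) :=
  Equiv.ofBijective d.e (Finite.injective_iff_bijective.1 d.e_inj)

lemma MCData.E_apply {c : Set (Set (Fin 6))} (d : MCData c) (k : Fin 6) : d.E k = d.e k := rfl

lemma MCData.A_eq_image {c : Set (Set (Fin 6))} (d : MCData c) :
    ∀ t, t ≤ 6 → d.A t = d.e '' {k : Fin 6 | k.1 < t} := by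
  intro t
  induction t with
  | zero =>
    intro _
    have : d.A 0 = ∅ := Set.ncard_eq_zero (Set.toFinite _) |>.1 (d.hcard 0 (by omega))
    rw [this]
    have : {k : Fin 6 | k.1 < 0} = ∅ := by ext k; simp
    rw [this, Set.image_empty]
  | succ t ih =>
    intro h6
    have hset : {k : Fin 6 | k.1 < t + 1} = insert ⟨t, by omega⟩ {k : Fin 6 | k.1 < t} := by
      ext k
      simp only [Set.mem_setOf_eq, Set.mem_insert_iff]
      constructor
      · intro h
        rcases Nat.lt_or_ge k.1 t with h' | h'
        · exact Or.inr h'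
        · refine Or.inl ?_
          apply Fin.ext
          show k.1 = t
          omega
      · rintro (rfl | h)
        · simp
        · omega
    rw [hset, Set.image_insert_eq, ← ih (by omega)]
    have := d.hx (t+1) (by omega) h6
    simp only [Nat.add_sub_cancel] at this
    rw [this, Set.union_singleton]
    congr 1

lemma MCData.g_maps {c c' : Set (Set (Fin 6))} (d : MCData c) (d' : MCData c') :
    ∀ t, t ≤ 6 → ⇑(d.E.symm.trans d'.E) '' d.A t = d'.A t := by
  intro t h6
  rw [d.A_eq_image t h6, d'.A_eq_image t h6]
  rw [← Set.image_comp]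
  apply Set.image_congr
  intro k _
  show d'.E (d.E.symm (d.e k)) = d'.e k
  rw [show d.e k = d.E k from rfl, Equiv.symm_apply_apply]
  rfl

lemma MCData.x_block {c : Set (Set (Fin 6))} (d : MCData c) (t : ℕ) (h1 : 1 ≤ t) (h6 : t ≤ 6) :
    d.x t ∈ triple 0 ↔ d.w t = d.w (t-1) + 1 := by
  rcases d.wstep t h1 h6 with ⟨h, hw⟩ | ⟨h, hw⟩
  · exact ⟨fun _ => hw, fun _ => h⟩
  · constructor
    · intro h'; exact absurd h' h
    · intro h'; exfalso; omega

/-- Two maximal chains with the same word are orbit-equivalent. -/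
lemma orb_of_word_eq {c c' : Set (Set (Fin 6))} (d : MCData c) (d' : MCData c')
    (hw : ∀ t, 1 ≤ t → t ≤ 5 → d.w t = d'.w t) : OrbEq c c' := by
  have hwall : ∀ t, t ≤ 6 → d.w t = d'.w t := by
    intro t h6
    rcases Nat.lt_or_ge t 1 with h | h
    · interval_cases t; rw [d.w0, d'.w0]
    rcases Nat.lt_or_ge t 6 with h' | h'
    · exact hw t h (by omega)
    · have : t = 6 := by omega
      subst this; rw [d.w6, d'.w6]
  set g := d.E.symm.trans d'.E with hg
  have hblock : ∀ n : Fin 6, n ∈ triple 0 ↔ g n ∈ triple 0 := by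
    intro n
    set k := d.E.symm n with hk
    have hn : n = d.e k := (d.E.apply_symm_apply n).symm
    have hgn : g n = d'.e k := by rw [hg]; rfl
    rw [hgn]
    nth_rewrite 1 [hn]
    rw [MCData.e, MCData.e]
    rw [d.x_block (k.1+1) (by omega) (by omega), d'.x_block (k.1+1) (by omega) (by omega)]
    rw [hwall (k.1+1) (by omega), hwall (k.1+1-1) (by omega)]
  have hblock1 : ∀ n : Fin 6, n ∈ triple 1 ↔ g n ∈ triple 1 := by
    intro n
    rw [T1_compl, Set.mem_compl_iff, Set.mem_compl_iff]
    exact not_congr (hblock n)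
  have himgT : ∀ (T : Set (Fin 6)), (∀ n : Fin 6, n ∈ T ↔ g n ∈ T) → ⇑g '' T = T := by
    intro T hT
    apply Set.eq_of_subset_of_subset
    · rintro _ ⟨n, hn, rfl⟩
      exact (hT n).1 hn
    · intro y hy
      refine ⟨g.symm y, ?_, by simp⟩
      have := hT (g.symm y)
      simp at this
      exact this.2 hy
  have hTP : IsTriplePerm g := by
    intro i
    fin_cases i
    · exact ⟨0, himgT _ hblock⟩
    · exact ⟨1, himgT _ hblock1⟩
  refine ⟨g, hTP, ?_⟩
  rw [d.hrepr, d'.hrepr, Set.image_image]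
  apply Set.image_congr
  intro t ht
  simp only [Set.mem_Icc] at ht
  exact d.g_maps d' t (by omega)

/-! ### Word classification -/

lemma word_classify {c : Set (Set (Fin 6))} (d : MCData c) :
    ∃ i : Fin 10,
      (∀ t, 1 ≤ t → t ≤ 5 → d.w t = aw i t) ∨
      (∀ t, 1 ≤ t → t ≤ 5 → d.w t + aw i t = t) := by
  have h0 := d.w0
  have s1 := (d.wstep 1 (by omega) (by omega)).imp And.right And.right
  have s2 := (d.wstep 2 (by omega) (by omega)).imp And.right And.right
  have s3 := (d.wstep 3 (by omega) (by omega)).imp And.right And.right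
  have s4 := (d.wstep 4 (by omega) (by omega)).imp And.right And.right
  have s5 := (d.wstep 5 (by omega) (by omega)).imp And.right And.right
  norm_num at s1 s2 s3 s4 s5
  have b3 := d.wbound 3 (by omega)
  have b4 := d.wbound 4 (by omega)
  have b5 := d.wbound 5 (by omega)
  rcases s1 with h1|h1 <;> rcases s2 with h2|h2 <;> rcases s3 with h3|h3 <;> rcases s4 with h4|h4 <;> rcases s5 with h5|h5
  · exfalso; omega
  · exfalso; omega
  · exfalso; omega
  · refine ⟨0, Or.inr fun t ht1 ht5 => ?_⟩
    have e1 : aw 0 1 = 0 := by decide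
    have e2 : aw 0 2 = 0 := by decide
    have e3 : aw 0 3 = 0 := by decide
    have e4 : aw 0 4 = 1 := by decide
    have e5 : aw 0 5 = 2 := by decide
    interval_cases t <;> omega
  · exfalso; omega
  · refine ⟨1, Or.inr fun t ht1 ht5 => ?_⟩
    have e1 : aw 1 1 = 0 := by decide
    have e2 : aw 1 2 = 0 := by decide
    have e3 : aw 1 3 = 1 := by decide
    have e4 : aw 1 4 = 1 := by decide
    have e5 : aw 1 5 = 2 := by decide
    interval_cases t <;> omega
  · refine ⟨2, Or.inr fun t ht1 ht5 => ?_⟩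
    have e1 : aw 2 1 = 0 := by decide
    have e2 : aw 2 2 = 0 := by decide
    have e3 : aw 2 3 = 1 := by decide
    have e4 : aw 2 4 = 2 := by decide
    have e5 : aw 2 5 = 2 := by decide
    interval_cases t <;> omega
  · refine ⟨3, Or.inr fun t ht1 ht5 => ?_⟩
    have e1 : aw 3 1 = 0 := by decide
    have e2 : aw 3 2 = 0 := by decide
    have e3 : aw 3 3 = 1 := by decide
    have e4 : aw 3 4 = 2 := by decide
    have e5 : aw 3 5 = 3 := by decide
    interval_cases t <;> omega
  · exfalso; omega
  · refine ⟨4, Or.inr fun t ht1 ht5 => ?_⟩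
    have e1 : aw 4 1 = 0 := by decide
    have e2 : aw 4 2 = 1 := by decide
    have e3 : aw 4 3 = 1 := by decide
    have e4 : aw 4 4 = 1 := by decide
    have e5 : aw 4 5 = 2 := by decide
    interval_cases t <;> omega
  · refine ⟨5, Or.inr fun t ht1 ht5 => ?_⟩
    have e1 : aw 5 1 = 0 := by decide
    have e2 : aw 5 2 = 1 := by decide
    have e3 : aw 5 3 = 1 := by decide
    have e4 : aw 5 4 = 2 := by decide
    have e5 : aw 5 5 = 2 := by decide
    interval_cases t <;> omega
  · refine ⟨6, Or.inr fun t ht1 ht5 => ?_⟩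
    have e1 : aw 6 1 = 0 := by decide
    have e2 : aw 6 2 = 1 := by decide
    have e3 : aw 6 3 = 1 := by decide
    have e4 : aw 6 4 = 2 := by decide
    have e5 : aw 6 5 = 3 := by decide
    interval_cases t <;> omega
  · refine ⟨7, Or.inr fun t ht1 ht5 => ?_⟩
    have e1 : aw 7 1 = 0 := by decide
    have e2 : aw 7 2 = 1 := by decide
    have e3 : aw 7 3 = 2 := by decide
    have e4 : aw 7 4 = 2 := by decide
    have e5 : aw 7 5 = 2 := by decide
    interval_cases t <;> omega
  · refine ⟨8, Or.inr fun t ht1 ht5 => ?_⟩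
    have e1 : aw 8 1 = 0 := by decide
    have e2 : aw 8 2 = 1 := by decide
    have e3 : aw 8 3 = 2 := by decide
    have e4 : aw 8 4 = 2 := by decide
    have e5 : aw 8 5 = 3 := by decide
    interval_cases t <;> omega
  · refine ⟨9, Or.inr fun t ht1 ht5 => ?_⟩
    have e1 : aw 9 1 = 0 := by decide
    have e2 : aw 9 2 = 1 := by decide
    have e3 : aw 9 3 = 2 := by decide
    have e4 : aw 9 4 = 3 := by decide
    have e5 : aw 9 5 = 3 := by decide
    interval_cases t <;> omega
  · exfalso; omega
  · exfalso; omega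
  · refine ⟨9, Or.inl fun t ht1 ht5 => ?_⟩
    have e1 : aw 9 1 = 0 := by decide
    have e2 : aw 9 2 = 1 := by decide
    have e3 : aw 9 3 = 2 := by decide
    have e4 : aw 9 4 = 3 := by decide
    have e5 : aw 9 5 = 3 := by decide
    interval_cases t <;> omega
  · refine ⟨8, Or.inl fun t ht1 ht5 => ?_⟩
    have e1 : aw 8 1 = 0 := by decide
    have e2 : aw 8 2 = 1 := by decide
    have e3 : aw 8 3 = 2 := by decide
    have e4 : aw 8 4 = 2 := by decide
    have e5 : aw 8 5 = 3 := by decide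
    interval_cases t <;> omega
  · refine ⟨7, Or.inl fun t ht1 ht5 => ?_⟩
    have e1 : aw 7 1 = 0 := by decide
    have e2 : aw 7 2 = 1 := by decide
    have e3 : aw 7 3 = 2 := by decide
    have e4 : aw 7 4 = 2 := by decide
    have e5 : aw 7 5 = 2 := by decide
    interval_cases t <;> omega
  · refine ⟨6, Or.inl fun t ht1 ht5 => ?_⟩
    have e1 : aw 6 1 = 0 := by decide
    have e2 : aw 6 2 = 1 := by decide
    have e3 : aw 6 3 = 1 := by decide
    have e4 : aw 6 4 = 2 := by decide
    have e5 : aw 6 5 = 3 := by decide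
    interval_cases t <;> omega
  · refine ⟨5, Or.inl fun t ht1 ht5 => ?_⟩
    have e1 : aw 5 1 = 0 := by decide
    have e2 : aw 5 2 = 1 := by decide
    have e3 : aw 5 3 = 1 := by decide
    have e4 : aw 5 4 = 2 := by decide
    have e5 : aw 5 5 = 2 := by decide
    interval_cases t <;> omega
  · refine ⟨4, Or.inl fun t ht1 ht5 => ?_⟩
    have e1 : aw 4 1 = 0 := by decide
    have e2 : aw 4 2 = 1 := by decide
    have e3 : aw 4 3 = 1 := by decide
    have e4 : aw 4 4 = 1 := by decide
    have e5 : aw 4 5 = 2 := by decide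
    interval_cases t <;> omega
  · exfalso; omega
  · refine ⟨3, Or.inl fun t ht1 ht5 => ?_⟩
    have e1 : aw 3 1 = 0 := by decide
    have e2 : aw 3 2 = 0 := by decide
    have e3 : aw 3 3 = 1 := by decide
    have e4 : aw 3 4 = 2 := by decide
    have e5 : aw 3 5 = 3 := by decide
    interval_cases t <;> omega
  · refine ⟨2, Or.inl fun t ht1 ht5 => ?_⟩
    have e1 : aw 2 1 = 0 := by decide
    have e2 : aw 2 2 = 0 := by decide
    have e3 : aw 2 3 = 1 := by decide
    have e4 : aw 2 4 = 2 := by decide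
    have e5 : aw 2 5 = 2 := by decide
    interval_cases t <;> omega
  · refine ⟨1, Or.inl fun t ht1 ht5 => ?_⟩
    have e1 : aw 1 1 = 0 := by decide
    have e2 : aw 1 2 = 0 := by decide
    have e3 : aw 1 3 = 1 := by decide
    have e4 : aw 1 4 = 1 := by decide
    have e5 : aw 1 5 = 2 := by decide
    interval_cases t <;> omega
  · exfalso; omega
  · refine ⟨0, Or.inl fun t ht1 ht5 => ?_⟩
    have e1 : aw 0 1 = 0 := by decide
    have e2 : aw 0 2 = 0 := by decide
    have e3 : aw 0 3 = 0 := by decide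
    have e4 : aw 0 4 = 1 := by decide
    have e5 : aw 0 5 = 2 := by decide
    interval_cases t <;> omega
  · exfalso; omega
  · exfalso; omega
  · exfalso; omega

/-! ### Classification of maximal chains up to the group action -/

lemma D_word (i : Fin 10) (d : MCData (D i)) :
    ∀ t, 1 ≤ t → t ≤ 5 → d.w t = aw i t := by
  intro t h1 h5
  have hm : mem10 i t ∈ D i := ⟨t, Set.mem_Icc.2 ⟨h1, h5⟩, rfl⟩
  have heq : d.A t = mem10 i t :=
    chain_rank_unique (D_max i).1.1 (d.hmem t h1 h5) hm
      (by rw [d.hcard t (by omega), mem10_ncard i t h1 h5])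
  rw [MCData.w, heq, mem10_T0 i t h1 h5]

lemma image_word {c : Set (Set (Fin 6))} (hc : MaxChain c) (d : MCData c)
    (d2 : MCData ((fun A => ⇑g0 '' A) '' c)) :
    ∀ t, 1 ≤ t → t ≤ 5 → d2.w t = t - d.w t := by
  intro t h1 h5
  have hc2 : MaxChain ((fun A => ⇑g0 '' A) '' c) := MaxChain_orb (OrbEq_image g0_TP c) hc
  have hmem : ⇑g0 '' d.A t ∈ (fun A => ⇑g0 '' A) '' c :=
    Set.mem_image_of_mem _ (d.hmem t h1 h5)
  have heq : d2.A t = ⇑g0 '' d.A t :=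
    chain_rank_unique hc2.1.1 (d2.hmem t h1 h5) hmem
      (by rw [d2.hcard t (by omega), img_ncard, d.hcard t (by omega)])
  have hint : ⇑g0 '' d.A t ∩ triple 0 = ⇑g0 '' (d.A t ∩ triple 1) := by
    rw [Set.image_inter g0.injective, g0_T1]
  rw [MCData.w, heq, hint, img_ncard]
  have hsplit := ncard_split (d.A t)
  rw [d.hcard t (by omega)] at hsplit
  unfold MCData.w
  omega

lemma classify {c : Set (Set (Fin 6))} (hc : MaxChain c) : ∃ i : Fin 10, OrbEq (D i) c := by
  set d := extract hc with hd
  obtain ⟨i, hi | hi⟩ := word_classify d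
  · refine ⟨i, orb_of_word_eq (extract (D_max i)) d ?_⟩
    intro t h1 h5
    rw [D_word i (extract (D_max i)) t h1 h5, hi t h1 h5]
  · set c2 := (fun A => ⇑g0 '' A) '' c with hc2def
    have horb : OrbEq c c2 := OrbEq_image g0_TP c
    have hc2 : MaxChain c2 := MaxChain_orb horb hc
    set d2 := extract hc2 with hd2
    have hw2 := image_word hc d d2
    refine ⟨i, (orb_of_word_eq (extract (D_max i)) d2 ?_).trans horb.symm⟩
    intro t h1 h5
    have hb := (d.wbound t (by omega)).2.2
    rw [D_word i (extract (D_max i)) t h1 h5, hw2 t h1 h5]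
    have := hi t h1 h5
    omega

/-! ### Distinctness of the canonical representatives -/

lemma words_distinct : ∀ i j : Fin 10,
    ((aw i 1 = aw j 1 ∧ aw i 2 = aw j 2 ∧ aw i 3 = aw j 3 ∧ aw i 4 = aw j 4 ∧ aw i 5 = aw j 5)
      ∨ aw i 1 + aw j 1 = 1) → i = j := by decide

lemma restrict_D_Icc (i : Fin 10) : restrict (D i) (Set.Icc 1 5) = D i := by
  rw [restrict_D i _ subset_rfl]; rfl

lemma D_orb_inj {i j : Fin 10} (h : OrbEq (D i) (D j)) : i = j := by
  have h' : OrbEq (restrict (D i) (Set.Icc 1 5)) (restrict (D j) (Set.Icc 1 5)) := by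
    rw [restrict_D_Icc, restrict_D_Icc]; exact h
  rcases agree_of_orb subset_rfl h' with ha | ha
  · refine words_distinct i j (Or.inl ?_)
    exact ⟨ha 1 (by simp), ha 2 (by simp), ha 3 (by simp), ha 4 (by simp), ha 5 (by simp)⟩
  · exact words_distinct i j (Or.inr (ha 1 (by simp)))

/-! ### The word-level shelling condition and its impossibility -/

def Agree (i j : Fin 10) (T : Finset (Fin 5)) : Prop :=
  (∀ t ∈ T, aw i (t.1+1) = aw j (t.1+1)) ∨ (∀ t ∈ T, aw i (t.1+1) + aw j (t.1+1) = t.1+1)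

instance (i j : Fin 10) (T : Finset (Fin 5)) : Decidable (Agree i j T) := by
  unfold Agree; infer_instance

def Ok (i : Fin 10) (E : Finset (Fin 10)) : Prop :=
  ∀ T : Finset (Fin 5), (∃ j ∈ E, Agree j i T) →
    ∃ T' : Finset (Fin 5), T ⊆ T' ∧ T'.card = 4 ∧ ∃ j' ∈ E, Agree j' i T'

instance (i : Fin 10) (E : Finset (Fin 10)) : Decidable (Ok i E) := by
  unfold Ok; infer_instance

def P2 (E : Finset (Fin 10)) : Prop :=
  E = {0,1} ∨ E = {1,2} ∨ E = {1,4} ∨ E = {2,5} ∨ E = {4,5} ∨ E = {3,6} ∨ E = {8,9}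
def P3 (E : Finset (Fin 10)) : Prop :=
  E = {0,1,2} ∨ E = {0,1,4} ∨ E = {1,2,4} ∨ E = {1,2,5} ∨ E = {1,4,5} ∨ E = {2,4,5}
def P4 (E : Finset (Fin 10)) : Prop :=
  E = {0,1,2,4} ∨ E = {0,1,2,5} ∨ E = {0,1,4,5} ∨ E = {1,2,4,5}
def P5 (E : Finset (Fin 10)) : Prop := E = {0,1,2,4,5}

instance : DecidablePred P2 := by unfold P2; infer_instance
instance : DecidablePred P3 := by unfold P3; infer_instance
instance : DecidablePred P4 := by unfold P4; infer_instance
instance : DecidablePred P5 := by unfold P5; infer_instance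

set_option maxRecDepth 100000 in
theorem lay2 : ∀ i j : Fin 10, i ≠ j → Ok i {j} → P2 {i,j} := by decide
set_option maxRecDepth 100000 in
theorem lay3 : ∀ i : Fin 10, (i ∉ ({0,1}:Finset (Fin 10)) → Ok i {0,1} → P3 (insert i {0,1})) ∧ (i ∉ ({1,2}:Finset (Fin 10)) → Ok i {1,2} → P3 (insert i {1,2})) ∧ (i ∉ ({1,4}:Finset (Fin 10)) → Ok i {1,4} → P3 (insert i {1,4})) ∧ (i ∉ ({2,5}:Finset (Fin 10)) → Ok i {2,5} → P3 (insert i {2,5})) ∧ (i ∉ ({4,5}:Finset (Fin 10)) → Ok i {4,5} → P3 (insert i {4,5})) ∧ (i ∉ ({3,6}:Finset (Fin 10)) → Ok i {3,6} → P3 (insert i {3,6})) ∧ (i ∉ ({8,9}:Finset (Fin 10)) → Ok i {8,9} → P3 (insert i {8,9})) := by decide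

set_option maxRecDepth 100000 in
theorem lay4 : ∀ i : Fin 10, (i ∉ ({0,1,2}:Finset (Fin 10)) → Ok i {0,1,2} → P4 (insert i {0,1,2})) ∧ (i ∉ ({0,1,4}:Finset (Fin 10)) → Ok i {0,1,4} → P4 (insert i {0,1,4})) ∧ (i ∉ ({1,2,4}:Finset (Fin 10)) → Ok i {1,2,4} → P4 (insert i {1,2,4})) ∧ (i ∉ ({1,2,5}:Finset (Fin 10)) → Ok i {1,2,5} → P4 (insert i {1,2,5})) ∧ (i ∉ ({1,4,5}:Finset (Fin 10)) → Ok i {1,4,5} → P4 (insert i {1,4,5})) ∧ (i ∉ ({2,4,5}:Finset (Fin 10)) → Ok i {2,4,5} → P4 (insert i {2,4,5})) := by decide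

set_option maxRecDepth 100000 in
theorem lay5 : ∀ i : Fin 10, (i ∉ ({0,1,2,4}:Finset (Fin 10)) → Ok i {0,1,2,4} → P5 (insert i {0,1,2,4})) ∧ (i ∉ ({0,1,2,5}:Finset (Fin 10)) → Ok i {0,1,2,5} → P5 (insert i {0,1,2,5})) ∧ (i ∉ ({0,1,4,5}:Finset (Fin 10)) → Ok i {0,1,4,5} → P5 (insert i {0,1,4,5})) ∧ (i ∉ ({1,2,4,5}:Finset (Fin 10)) → Ok i {1,2,4,5} → P5 (insert i {1,2,4,5})) := by decide

set_option maxRecDepth 100000 in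
theorem lay6 : ∀ i : Fin 10, i ∉ ({0,1,2,4,5}:Finset (Fin 10)) → ¬ Ok i {0,1,2,4,5} := by decide

lemma lay3' (E : Finset (Fin 10)) (hE : P2 E) (i : Fin 10) (hi : i ∉ E) (hOk : Ok i E) : P3 (insert i E) := by
  rcases hE with h|h|h|h|h|h|h
  · rw [h] at hi hOk ⊢; exact (lay3 i).1 hi hOk
  · rw [h] at hi hOk ⊢; exact (lay3 i).2.1 hi hOk
  · rw [h] at hi hOk ⊢; exact (lay3 i).2.2.1 hi hOk
  · rw [h] at hi hOk ⊢; exact (lay3 i).2.2.2.1 hi hOk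
  · rw [h] at hi hOk ⊢; exact (lay3 i).2.2.2.2.1 hi hOk
  · rw [h] at hi hOk ⊢; exact (lay3 i).2.2.2.2.2.1 hi hOk
  · rw [h] at hi hOk ⊢; exact (lay3 i).2.2.2.2.2.2 hi hOk

lemma lay4' (E : Finset (Fin 10)) (hE : P3 E) (i : Fin 10) (hi : i ∉ E) (hOk : Ok i E) : P4 (insert i E) := by
  rcases hE with h|h|h|h|h|h
  · rw [h] at hi hOk ⊢; exact (lay4 i).1 hi hOk
  · rw [h] at hi hOk ⊢; exact (lay4 i).2.1 hi hOk
  · rw [h] at hi hOk ⊢; exact (lay4 i).2.2.1 hi hOk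
  · rw [h] at hi hOk ⊢; exact (lay4 i).2.2.2.1 hi hOk
  · rw [h] at hi hOk ⊢; exact (lay4 i).2.2.2.2.1 hi hOk
  · rw [h] at hi hOk ⊢; exact (lay4 i).2.2.2.2.2 hi hOk

lemma lay5' (E : Finset (Fin 10)) (hE : P4 E) (i : Fin 10) (hi : i ∉ E) (hOk : Ok i E) : P5 (insert i E) := by
  rcases hE with h|h|h|h
  · rw [h] at hi hOk ⊢; exact (lay5 i).1 hi hOk
  · rw [h] at hi hOk ⊢; exact (lay5 i).2.1 hi hOk
  · rw [h] at hi hOk ⊢; exact (lay5 i).2.2.1 hi hOk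
  · rw [h] at hi hOk ⊢; exact (lay5 i).2.2.2 hi hOk

lemma lay6' (E : Finset (Fin 10)) (hE : P5 E) (i : Fin 10) (hi : i ∉ E) : ¬ Ok i E := by
  rw [hE] at hi ⊢; exact lay6 i hi

theorem core {r : ℕ} (φ : Fin 10 → Fin r) (hinj : Function.Injective φ)
    (hOk : ∀ i, Ok i (Finset.univ.filter fun j => φ j < φ i)) : False := by
  set m := Tuple.sort φ with hm
  have hmono : Monotone (φ ∘ m) := Tuple.monotone_sort φ
  have hsm : StrictMono (φ ∘ m) := hmono.strictMono_of_injective (hinj.comp m.injective)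
  have hlt : ∀ a b : Fin 10, φ (m a) < φ (m b) ↔ a < b := fun a b => hsm.lt_iff_lt
  have hS : ∀ a : Fin 10, (Finset.univ.filter fun j => φ j < φ (m a)) =
      (Finset.univ.filter fun b : Fin 10 => b < a).image m := by
    intro a
    ext j
    simp only [Finset.mem_filter, Finset.mem_univ, true_and, Finset.mem_image]
    constructor
    · intro hj
      refine ⟨m.symm j, ?_, by simp⟩
      have hj' : φ (m (m.symm j)) < φ (m a) := by rwa [Equiv.apply_symm_apply]
      exact (hlt _ _).1 hj'
    · rintro ⟨b, hb, rfl⟩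
      exact (hlt b a).2 hb
  have hni : ∀ a : Fin 10, m a ∉ (Finset.univ.filter fun j => φ j < φ (m a)) := by
    intro a
    simp
  have f1 : (Finset.univ.filter fun b : Fin 10 => b < (1:Fin 10)) = {0} := by decide
  have f2 : (Finset.univ.filter fun b : Fin 10 => b < (2:Fin 10)) = insert 1 {0} := by decide
  have f3 : (Finset.univ.filter fun b : Fin 10 => b < (3:Fin 10)) = insert 2 (insert 1 {0}) := by decide
  have f4 : (Finset.univ.filter fun b : Fin 10 => b < (4:Fin 10)) = insert 3 (insert 2 (insert 1 {0})) := by decide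
  have f5 : (Finset.univ.filter fun b : Fin 10 => b < (5:Fin 10)) = insert 4 (insert 3 (insert 2 (insert 1 {0}))) := by decide
  have e1 : (Finset.univ.filter fun j => φ j < φ (m 1)) = {m 0} := by
    rw [hS 1, f1, Finset.image_singleton]
  have e2 : (Finset.univ.filter fun j => φ j < φ (m 2)) = insert (m 1) {m 0} := by
    rw [hS 2, f2, Finset.image_insert, Finset.image_singleton]
  have e3 : (Finset.univ.filter fun j => φ j < φ (m 3)) = insert (m 2) (insert (m 1) {m 0}) := by
    rw [hS 3, f3, Finset.image_insert, Finset.image_insert, Finset.image_singleton]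
  have e4 : (Finset.univ.filter fun j => φ j < φ (m 4)) =
      insert (m 3) (insert (m 2) (insert (m 1) {m 0})) := by
    rw [hS 4, f4, Finset.image_insert, Finset.image_insert, Finset.image_insert,
      Finset.image_singleton]
  have e5 : (Finset.univ.filter fun j => φ j < φ (m 5)) =
      insert (m 4) (insert (m 3) (insert (m 2) (insert (m 1) {m 0}))) := by
    rw [hS 5, f5, Finset.image_insert, Finset.image_insert, Finset.image_insert,
      Finset.image_insert, Finset.image_singleton]
  have hne10 : m 1 ≠ m 0 := fun h => by
    have := m.injective h
    exact absurd this (by decide)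
  have hP2 : P2 (insert (m 1) {m 0}) := lay2 (m 1) (m 0) hne10 (e1 ▸ hOk (m 1))
  have hP3 : P3 (insert (m 2) (insert (m 1) {m 0})) :=
    lay3' _ hP2 (m 2) (e2 ▸ hni 2) (e2 ▸ hOk (m 2))
  have hP4 : P4 (insert (m 3) (insert (m 2) (insert (m 1) {m 0}))) :=
    lay4' _ hP3 (m 3) (e3 ▸ hni 3) (e3 ▸ hOk (m 3))
  have hP5 : P5 (insert (m 4) (insert (m 3) (insert (m 2) (insert (m 1) {m 0}))))  :=
    lay5' _ hP4 (m 4) (e4 ▸ hni 4) (e4 ▸ hOk (m 4))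
  exact lay6' _ hP5 (m 5) (e5 ▸ hni 5) (e5 ▸ hOk (m 5))


theorem quotient_complex_not_shellable :
    ¬ ∃ (r : ℕ) (F : Fin r → Set (Set (Fin 6))),
        (∀ l, MaxChain (F l)) ∧
        (∀ d, MaxChain d → ∃! l, OrbEq (F l) d) ∧
        (∀ (l : Fin r) (σ : Set (Set (Fin 6))), ProperChain σ →
          (∃ k, k < l ∧ IsFaceOf σ (F l) ∧ IsFaceOf σ (F k)) →
          ∃ T' : Finset ℕ, ↑T' ⊆ Set.Icc 1 5 ∧ T'.card = 4 ∧
            rankSet σ ⊆ ↑T' ∧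
            ∃ k', k' < l ∧ IsFaceOf (restrict (F l) ↑T') (F k')) := by
  rintro ⟨r, F, hmax, huniq, hshell⟩
  have hchoice : ∀ i : Fin 10, ∃ l, OrbEq (F l) (D i) ∧ ∀ l', OrbEq (F l') (D i) → l' = l := by
    intro i
    obtain ⟨l, hl, hu⟩ := huniq (D i) (D_max i)
    exact ⟨l, hl, hu⟩
  choose φ hφ hφu using hchoice
  have hinj : Function.Injective φ := by
    intro i j h
    apply D_orb_inj
    exact (hφ i).symm.trans (h ▸ hφ j)
  have hsurj : ∀ l : Fin r, ∃ i, φ i = l := by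
    intro l
    obtain ⟨i, hi⟩ := classify (hmax l)
    exact ⟨i, (hφu i l hi.symm).symm⟩
  have hOk : ∀ i : Fin 10, Ok i (Finset.univ.filter fun j => φ j < φ i) := by
    intro i T hT
    obtain ⟨j, hjmem, hjA⟩ := hT
    have hjlt : φ j < φ i := (Finset.mem_filter.1 hjmem).2
    set S : Set ℕ := ↑(T.image (fun t : Fin 5 => t.1+1)) with hSdef
    have hSsub : S ⊆ Set.Icc 1 5 := by
      intro n hn
      simp only [hSdef, Finset.coe_image, Set.mem_image, Finset.mem_coe] at hn
      obtain ⟨t, _, rfl⟩ := hn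
      have := t.isLt
      simp only [Set.mem_Icc]
      omega
    set σ := restrict (D i) S with hσ
    have hσsub : σ ⊆ D i := fun A hA => hA.1
    have hproper : ProperChain σ := ProperChain_mono hσsub (D_max i).1
    have hrankσ : rankSet σ = S := by
      rw [hσ, rankSet_restrict, (D_max i).2]
      exact Set.inter_eq_right.2 hSsub
    have hagreeS : (∀ t ∈ S, aw j t = aw i t) ∨ (∀ t ∈ S, aw j t + aw i t = t) := by
      rcases hjA with h | h
      · left
        intro n hn
        simp only [hSdef, Finset.coe_image, Set.mem_image, Finset.mem_coe] at hn
        obtain ⟨t, ht, rfl⟩ := hn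
        exact h t ht
      · right
        intro n hn
        simp only [hSdef, Finset.coe_image, Set.mem_image, Finset.mem_coe] at hn
        obtain ⟨t, ht, rfl⟩ := hn
        exact h t ht
    have hfacej : IsFaceOf σ (F (φ j)) := by
      rw [IsFaceOf_congr (hφ j)]
      show OrbEq (restrict (D j) (rankSet σ)) σ
      rw [hrankσ]
      exact orb_of_agree hSsub hagreeS
    have hfacei : IsFaceOf σ (F (φ i)) := by
      rw [IsFaceOf_congr (hφ i)]
      show OrbEq (restrict (D i) (rankSet σ)) σ
      rw [hrankσ]
      exact OrbEq.refl _
    obtain ⟨T', hT'Icc, hT'card, hrsub, k', hk', hface'⟩ :=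
      hshell (φ i) σ hproper ⟨φ j, hjlt, hfacei, hfacej⟩
    obtain ⟨j', rfl⟩ := hsurj k'
    set T'' : Finset (Fin 5) := Finset.univ.filter (fun u : Fin 5 => u.1+1 ∈ T') with hT''def
    have hNTf : T''.image (fun t : Fin 5 => t.1+1) = T' := by
      ext n
      simp only [Finset.mem_image, hT''def, Finset.mem_filter, Finset.mem_univ, true_and]
      constructor
      · rintro ⟨u, hu, rfl⟩
        exact hu
      · intro hn
        have hIcc := hT'Icc hn
        simp only [Set.mem_Icc] at hIcc
        refine ⟨⟨n-1, by omega⟩, ?_, ?_⟩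
        · show (n-1)+1 ∈ T'
          have : (n-1)+1 = n := by omega
          rw [this]
          exact hn
        · show (n-1)+1 = n
          omega
    have hplusinj : Function.Injective (fun t : Fin 5 => t.1+1) := by
      intro a b h
      simp only [] at h
      exact Fin.ext (by omega)
    have hT''card : T''.card = 4 := by
      rw [← hT'card, ← hNTf, Finset.card_image_of_injective _ hplusinj]
    have hTsub : T ⊆ T'' := by
      intro t ht
      have htS : (t.1+1 : ℕ) ∈ S := by
        simp only [hSdef, Finset.coe_image, Set.mem_image, Finset.mem_coe]
        exact ⟨t, ht, rfl⟩
      have : (t.1+1 : ℕ) ∈ (↑T' : Set ℕ) := hrsub (hrankσ ▸ htS)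
      simp only [hT''def, Finset.mem_filter, Finset.mem_univ, true_and]
      exact this
    -- extract the word agreement for j'
    have h2 : OrbEq (restrict (F (φ i)) ↑T') (restrict (D i) ↑T') :=
      OrbEq_restrict (hφ i) _
    have hrankσ' : rankSet (restrict (F (φ i)) ↑T') = ↑T' := by
      rw [rankSet_restrict, (hmax (φ i)).2]
      exact Set.inter_eq_right.2 hT'Icc
    have hface'' : OrbEq (restrict (D j') ↑T') (restrict (D i) ↑T') := by
      have h3 : IsFaceOf (restrict (F (φ i)) ↑T') (D j') :=
        (IsFaceOf_congr (hφ j')).1 hface'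
      have h4 : OrbEq (restrict (D j') ↑T') (restrict (F (φ i)) ↑T') := by
        have := h3
        unfold IsFaceOf at this
        rwa [hrankσ'] at this
      exact h4.trans h2
    have hagree' := agree_of_orb hT'Icc hface''
    have hAgree : Agree j' i T'' := by
      rcases hagree' with h | h
      · left
        intro u hu
        simp only [hT''def, Finset.mem_filter, Finset.mem_univ, true_and] at hu
        exact h _ hu
      · right
        intro u hu
        simp only [hT''def, Finset.mem_filter, Finset.mem_univ, true_and] at hu
        exact h _ hu
    exact ⟨T'', hTsub, hT''card, j',
      Finset.mem_filter.2 ⟨Finset.mem_univ _, hk'⟩, hAgree⟩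
  exact core φ hinj hOk

end Stmt4
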